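/- arXiv:2105.01550 — 2 statements merged into one kernel-verified Lean document; each statement's English description precedes it below -/
import Mathlib

section
/- Let d ≥ 2, ρ > 0 and G > 1 + γ, and let φ_ρ be the ρ-margin loss. Then φ_ρ is H_relu-calibrated with respect to the adversarial 0/1 loss ℓ_γ if and only if G ≥ ρ > γ. -/
open scoped RealInnerProductSpace

noncomputable section

/-- A loss assigns a value to a predictor `f`, a point `x`, and a label `y` (±1). -/
abbrev Loss (d : ℕ) := ((EuclideanSpace ℝ (Fin d)) → ℝ) → (EuclideanSpace ℝ (Fin d)) → ℝ → ℝ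

variable {d : ℕ}

/-- The inner (conditional) ℓ-risk. -/
def innerRisk (ℓ : Loss d) (f : EuclideanSpace ℝ (Fin d) → ℝ)
    (x : EuclideanSpace ℝ (Fin d)) (η : ℝ) : ℝ :=
  η * ℓ f x 1 + (1 - η) * ℓ f x (-1)

/-- The minimal inner ℓ-risk over a hypothesis set `H`. -/
def minInnerRisk (ℓ : Loss d) (H : Set (EuclideanSpace ℝ (Fin d) → ℝ))
    (x : EuclideanSpace ℝ (Fin d)) (η : ℝ) : ℝ :=
  ⨅ f : H, innerRisk ℓ f x η

/-- ℓ₁ is H-calibrated with respect to ℓ₂. -/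
def Calibrated (H : Set (EuclideanSpace ℝ (Fin d) → ℝ)) (ℓ₁ ℓ₂ : Loss d) : Prop :=
  ∀ ε > (0:ℝ), ∀ η ∈ Set.Icc (0:ℝ) 1, ∀ x : EuclideanSpace ℝ (Fin d), ‖x‖ ≤ 1 →
    ∃ δ > (0:ℝ), ∀ f ∈ H,
      innerRisk ℓ₁ f x η < minInnerRisk ℓ₁ H x η + δ →
      innerRisk ℓ₂ f x η < minInnerRisk ℓ₂ H x η + ε

/-- The adversarial 0/1 loss with perturbation radius γ. -/
def advLoss (γ : ℝ) : Loss d := fun f x y =>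
  ⨆ x' : Metric.closedBall x γ, (if y * f ↑x' ≤ 0 then (1:ℝ) else 0)

/-- A margin-based loss viewed as a loss. -/
def marginLoss (φ : ℝ → ℝ) : Loss d := fun f x y => φ (y * f x)

/-- The supremum-based surrogate of a margin-based loss. -/
def supLoss (γ : ℝ) (φ : ℝ → ℝ) : Loss d := fun f x y =>
  ⨆ x' : Metric.closedBall x γ, φ (y * f ↑x')

/-- Infimum of f over the closed γ-ball around x. -/
def infBall (γ : ℝ) (f : EuclideanSpace ℝ (Fin d) → ℝ) (x : EuclideanSpace ℝ (Fin d)) : ℝ :=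
  ⨅ x' : Metric.closedBall x γ, f ↑x'

/-- Supremum of f over the closed γ-ball around x. -/
def supBall (γ : ℝ) (f : EuclideanSpace ℝ (Fin d) → ℝ) (x : EuclideanSpace ℝ (Fin d)) : ℝ :=
  ⨆ x' : Metric.closedBall x γ, f ↑x'

/-- x is a distinguishing point for H. -/
def Distinguishing (γ : ℝ) (H : Set (EuclideanSpace ℝ (Fin d) → ℝ))
    (x : EuclideanSpace ℝ (Fin d)) : Prop :=
  ‖x‖ ≤ 1 ∧ (∃ f ∈ H, 0 < infBall γ f x) ∧ (∃ g ∈ H, supBall γ g x < 0)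

/-- H is regular for adversarial calibration. -/
def RegularAdv (γ : ℝ) (H : Set (EuclideanSpace ℝ (Fin d) → ℝ)) : Prop :=
  ∃ x, Distinguishing γ H x

/-- H is symmetric. -/
def SymmetricH (H : Set (EuclideanSpace ℝ (Fin d) → ℝ)) : Prop :=
  ∀ f ∈ H, -f ∈ H

/-- Linear hypothesis set. -/
def Hlin (d : ℕ) : Set (EuclideanSpace ℝ (Fin d) → ℝ) :=
  { f | ∃ w : EuclideanSpace ℝ (Fin d), ‖w‖ = 1 ∧ f = fun x => (inner ℝ w x : ℝ) }

/-- Generalized linear hypothesis set. -/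
def Hg (d : ℕ) (g : ℝ → ℝ) (G : ℝ) : Set (EuclideanSpace ℝ (Fin d) → ℝ) :=
  { f | ∃ (w : EuclideanSpace ℝ (Fin d)) (b : ℝ), ‖w‖ = 1 ∧ |b| ≤ G ∧
      f = fun x => g (inner ℝ w x : ℝ) + b }

/-- ReLU-based hypothesis set. -/
def Hrelu (d : ℕ) (G : ℝ) : Set (EuclideanSpace ℝ (Fin d) → ℝ) :=
  Hg d (fun t => max t 0) G

/-- One-layer ReLU neural network hypothesis set. -/
def Hnn (d n : ℕ) (Λ W : ℝ) : Set (EuclideanSpace ℝ (Fin d) → ℝ) :=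
  { f | ∃ (u : Fin n → ℝ) (w : Fin n → EuclideanSpace ℝ (Fin d)),
      (∑ j, |u j|) ≤ Λ ∧ (∀ j, ‖w j‖ ≤ W) ∧
      f = fun x => ∑ j, u j * max (inner ℝ (w j) x : ℝ) 0 }

/-- All (Borel) measurable functions. -/
def Hall (d : ℕ) : Set (EuclideanSpace ℝ (Fin d) → ℝ) :=
  { f | Measurable f }

/-- The ρ-margin loss. -/
def phiRho (ρ t : ℝ) : ℝ := min 1 (max 0 (1 - t / ρ))


section Aux

local notation "E" => EuclideanSpace ℝ (Fin d)

/-! ### phiRho lemmas -/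

lemma phiRho_nonneg (ρ t : ℝ) : 0 ≤ phiRho ρ t :=
  le_min zero_le_one (le_max_left _ _)

lemma phiRho_le_one (ρ t : ℝ) : phiRho ρ t ≤ 1 := min_le_left _ _

lemma phiRho_of_nonpos {ρ t : ℝ} (hρ : 0 < ρ) (ht : t ≤ 0) : phiRho ρ t = 1 := by
  have h : t / ρ ≤ 0 := div_nonpos_iff.mpr (Or.inr ⟨ht, hρ.le⟩)
  have h1 : (1:ℝ) ≤ 1 - t / ρ := by linarith
  unfold phiRho
  rw [min_eq_left]
  exact le_trans h1 (le_max_right _ _)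

lemma phiRho_of_ge {ρ t : ℝ} (hρ : 0 < ρ) (ht : ρ ≤ t) : phiRho ρ t = 0 := by
  have h : (1:ℝ) ≤ t / ρ := (one_le_div hρ).mpr ht
  have h1 : 1 - t / ρ ≤ 0 := by linarith
  unfold phiRho
  rw [max_eq_left h1, min_eq_right zero_le_one]

lemma phiRho_ge {ρ t : ℝ} (ht : 0 ≤ t / ρ) : 1 - t / ρ ≤ phiRho ρ t :=
  le_min (by linarith) (le_max_right _ _)

lemma phiRho_anti {ρ : ℝ} (hρ : 0 < ρ) {t₁ t₂ : ℝ} (h : t₁ ≤ t₂) :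
    phiRho ρ t₂ ≤ phiRho ρ t₁ := by
  unfold phiRho
  have : 1 - t₂ / ρ ≤ 1 - t₁ / ρ := by
    have := (div_le_div_iff_of_pos_right hρ).mpr h
    linarith
  exact min_le_min le_rfl (max_le_max le_rfl this)

lemma phiRho_add_ge {ρ : ℝ} (hρ : 0 < ρ) (t : ℝ) :
    1 ≤ phiRho ρ t + phiRho ρ (-t) := by
  rcases le_total t 0 with h | h
  · rw [phiRho_of_nonpos hρ h]
    have := phiRho_nonneg ρ (-t); linarith
  · rw [phiRho_of_nonpos hρ (by linarith : -t ≤ 0)]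
    have := phiRho_nonneg ρ t; linarith

/-! ### advLoss lemmas -/

lemma advLoss_eq_one {γ : ℝ} (hγ : 0 ≤ γ) (f : E → ℝ) (x : E) (y : ℝ)
    (h : ∃ x' ∈ Metric.closedBall x γ, y * f x' ≤ 0) :
    advLoss γ f x y = 1 := by
  haveI : Nonempty (Metric.closedBall x γ) := ⟨⟨x, Metric.mem_closedBall_self hγ⟩⟩
  obtain ⟨x', hx', hle⟩ := h
  unfold advLoss
  apply le_antisymm
  · exact ciSup_le fun b => by split <;> norm_num
  · have hb : BddAbove (Set.range fun x'' : Metric.closedBall x γ =>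
        if y * f ↑x'' ≤ 0 then (1:ℝ) else 0) := by
      refine ⟨1, ?_⟩; rintro r ⟨b, rfl⟩; dsimp only; split <;> norm_num
    have h2 := le_ciSup hb (⟨x', hx'⟩ : Metric.closedBall x γ)
    simpa [hle] using h2

lemma advLoss_eq_zero {γ : ℝ} (hγ : 0 ≤ γ) (f : E → ℝ) (x : E) (y : ℝ)
    (h : ∀ x' ∈ Metric.closedBall x γ, ¬ (y * f x' ≤ 0)) :
    advLoss γ f x y = 0 := by
  haveI : Nonempty (Metric.closedBall x γ) := ⟨⟨x, Metric.mem_closedBall_self hγ⟩⟩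
  unfold advLoss
  have he : (fun x'' : Metric.closedBall x γ => if y * f ↑x'' ≤ 0 then (1:ℝ) else 0)
      = fun _ => 0 := funext fun b => if_neg (h b b.2)
  rw [he]
  exact ciSup_const

lemma advLoss_mem {γ : ℝ} (hγ : 0 ≤ γ) (f : E → ℝ) (x : E) (y : ℝ) :
    advLoss γ f x y = 0 ∨ advLoss γ f x y = 1 := by
  by_cases h : ∃ x' ∈ Metric.closedBall x γ, y * f x' ≤ 0
  · exact Or.inr (advLoss_eq_one hγ f x y h)
  · push_neg at h
    exact Or.inl (advLoss_eq_zero hγ f x y fun x' hx' => not_le.mpr (h x' hx'))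

lemma advLoss_nonneg {γ : ℝ} (hγ : 0 ≤ γ) (f : E → ℝ) (x : E) (y : ℝ) :
    0 ≤ advLoss γ f x y := by
  rcases advLoss_mem hγ f x y with h | h <;> rw [h] <;> norm_num

lemma advLoss_le_one {γ : ℝ} (hγ : 0 ≤ γ) (f : E → ℝ) (x : E) (y : ℝ) :
    advLoss γ f x y ≤ 1 := by
  rcases advLoss_mem hγ f x y with h | h <;> rw [h] <;> norm_num

lemma advRisk_eq {γ : ℝ} (f : E → ℝ) (x : E) (η : ℝ) :
    innerRisk (advLoss γ) f x η = η * advLoss γ f x 1 + (1 - η) * advLoss γ f x (-1) := rfl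

lemma advRisk_nonneg {γ : ℝ} (hγ : 0 ≤ γ) (f : E → ℝ) (x : E) {η : ℝ}
    (hη0 : 0 ≤ η) (hη1 : η ≤ 1) : 0 ≤ innerRisk (advLoss γ) f x η := by
  rw [advRisk_eq]
  have h1 := advLoss_nonneg hγ f x 1
  have h2 := advLoss_nonneg hγ f x (-1)
  nlinarith

lemma advRisk_ge {γ : ℝ} (hγ : 0 ≤ γ) (f : E → ℝ) (x : E) {η : ℝ}
    (hη0 : 0 ≤ η) (hη1 : η ≤ 1) :
    min η (1 - η) ≤ innerRisk (advLoss γ) f x η := by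
  rw [advRisk_eq]
  have hx : x ∈ Metric.closedBall x γ := Metric.mem_closedBall_self hγ
  rcases le_or_gt (f x) 0 with h | h
  · have hA : advLoss γ f x 1 = 1 := advLoss_eq_one hγ f x 1 ⟨x, hx, by linarith⟩
    have hB := advLoss_nonneg hγ f x (-1)
    rw [hA]
    calc min η (1-η) ≤ η := min_le_left _ _
      _ ≤ η * 1 + (1-η) * advLoss γ f x (-1) := by nlinarith
  · have hB : advLoss γ f x (-1) = 1 := advLoss_eq_one hγ f x (-1) ⟨x, hx, by linarith⟩
    have hA := advLoss_nonneg hγ f x 1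
    rw [hB]
    calc min η (1-η) ≤ 1 - η := min_le_right _ _
      _ ≤ η * advLoss γ f x 1 + (1-η) * 1 := by nlinarith

/-! ### margin risk lemmas -/

lemma marginRisk_eq (φ : ℝ → ℝ) (f : E → ℝ) (x : E) (η : ℝ) :
    innerRisk (marginLoss φ) f x η = η * φ (f x) + (1 - η) * φ (-(f x)) := by
  simp [innerRisk, marginLoss, neg_one_mul]

lemma marginRisk_nonneg {ρ : ℝ} (f : E → ℝ) (x : E) {η : ℝ}
    (hη0 : 0 ≤ η) (hη1 : η ≤ 1) :
    0 ≤ innerRisk (marginLoss (phiRho ρ)) f x η := by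
  rw [marginRisk_eq]
  have h1 := phiRho_nonneg ρ (f x)
  have h2 := phiRho_nonneg ρ (-(f x))
  nlinarith

/-! ### Hrelu lemmas -/

lemma mem_Hrelu {G : ℝ} (w : E) (hw : ‖w‖ = 1) (b : ℝ) (hb : |b| ≤ G) :
    (fun z : E => max (inner ℝ w z : ℝ) 0 + b) ∈ Hrelu d G :=
  ⟨w, b, hw, hb, rfl⟩

lemma relu_le_norm (w x' : E) (hw : ‖w‖ = 1) : max (inner ℝ w x' : ℝ) 0 ≤ ‖x'‖ :=
  max_le (by simpa [hw] using real_inner_le_norm w x') (norm_nonneg _)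

lemma relu_lip (w : E) (b : ℝ) (hw : ‖w‖ = 1) (x x' : E) :
    |(max (inner ℝ w x' : ℝ) 0 + b) - (max (inner ℝ w x : ℝ) 0 + b)| ≤ dist x' x := by
  have h1 : |max (inner ℝ w x' : ℝ) 0 - max (inner ℝ w x : ℝ) 0|
      ≤ |(inner ℝ w x' : ℝ) - (inner ℝ w x : ℝ)| := abs_max_sub_max_le_abs _ _ _
  have h2 : (inner ℝ w x' : ℝ) - (inner ℝ w x : ℝ) = (inner ℝ w (x' - x) : ℝ) :=
    (inner_sub_right _ _ _).symm
  have h3 : |(inner ℝ w (x' - x) : ℝ)| ≤ ‖x' - x‖ := by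
    simpa [hw] using abs_real_inner_le_norm w (x' - x)
  rw [dist_eq_norm]
  calc |(max (inner ℝ w x' : ℝ) 0 + b) - (max (inner ℝ w x : ℝ) 0 + b)|
      = |max (inner ℝ w x' : ℝ) 0 - max (inner ℝ w x : ℝ) 0| := by ring_nf
    _ ≤ ‖x' - x‖ := by rw [h2] at h1; exact h1.trans h3

lemma exists_unit (hd : 1 ≤ d) : ∃ w : E, ‖w‖ = 1 := by
  refine ⟨EuclideanSpace.single (⟨0, hd⟩ : Fin d) (1:ℝ), ?_⟩
  simp [EuclideanSpace.norm_single]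

lemma exists_unit_inner_nonpos (hd : 1 ≤ d) (x : E) :
    ∃ w : E, ‖w‖ = 1 ∧ (inner ℝ w x : ℝ) ≤ 0 := by
  by_cases hx : x = 0
  · obtain ⟨w, hw⟩ := exists_unit hd
    exact ⟨w, hw, by simp [hx]⟩
  · refine ⟨(-‖x‖⁻¹) • x, ?_, ?_⟩
    · have h0 : ‖x‖ ≠ 0 := norm_ne_zero_iff.mpr hx
      rw [norm_smul, Real.norm_eq_abs, abs_neg, abs_inv, abs_norm]
      field_simp
    · rw [real_inner_smul_left, real_inner_self_eq_norm_sq]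
      have h : 0 < ‖x‖ := norm_pos_iff.mpr hx
      have : (-‖x‖⁻¹) * ‖x‖^2 = -‖x‖ := by field_simp
      rw [this]; linarith

/-- the "danger zone" bound -/
lemma danger {ρ γ η t : ℝ} (hρ : 0 < ρ) (hγ0 : 0 ≤ γ) (hγρ : γ < ρ)
    (hη0 : 0 ≤ η) (hη1 : η ≤ 1) (ht : |t| ≤ γ) :
    min η (1 - η) + (1 - γ/ρ)/2 ≤ η * phiRho ρ t + (1 - η) * phiRho ρ (-t) := by
  have hs0 : 0 ≤ γ / ρ := div_nonneg hγ0 hρ.le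
  have hs1 : γ / ρ < 1 := (div_lt_one hρ).mpr hγρ
  have habs := abs_le.mp ht
  rcases le_total t 0 with h | h
  · rw [phiRho_of_nonpos hρ h]
    have h1 : 1 - γ/ρ ≤ phiRho ρ (-t) := by
      have hd : -t / ρ ≤ γ / ρ := (div_le_div_iff_of_pos_right hρ).mpr (by linarith)
      have hge := phiRho_ge (t := -t) (ρ := ρ) (div_nonneg (by linarith) hρ.le)
      linarith
    have hmain : min η (1-η) + (1 - γ/ρ)/2 ≤ η * 1 + (1-η) * (1 - γ/ρ) := by
      rcases le_total η (1-η) with hm | hm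
      · rw [min_eq_left hm]; nlinarith
      · rw [min_eq_right hm]; nlinarith
    nlinarith [phiRho_nonneg ρ (-t)]
  · rw [phiRho_of_nonpos hρ (by linarith : -t ≤ 0)]
    have h1 : 1 - γ/ρ ≤ phiRho ρ t := by
      have hd : t / ρ ≤ γ / ρ := (div_le_div_iff_of_pos_right hρ).mpr (by linarith)
      have hge := phiRho_ge (t := t) (ρ := ρ) (div_nonneg (by linarith) hρ.le)
      linarith
    have hmain : min η (1-η) + (1 - γ/ρ)/2 ≤ η * (1 - γ/ρ) + (1-η) * 1 := by
      rcases le_total η (1-η) with hm | hm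
      · rw [min_eq_left hm]; nlinarith
      · rw [min_eq_right hm]; nlinarith
    nlinarith [phiRho_nonneg ρ t]

/-! ### min-risk bounds -/

lemma minAdv_ge {γ η : ℝ} (hγ : 0 ≤ γ) {H : Set (E → ℝ)} (hne : H.Nonempty)
    (x : E) (hη0 : 0 ≤ η) (hη1 : η ≤ 1) :
    min η (1 - η) ≤ minInnerRisk (advLoss γ) H x η := by
  haveI : Nonempty H := hne.to_subtype
  exact le_ciInf fun g => advRisk_ge hγ g x hη0 hη1

lemma minAdv_le {γ η : ℝ} (hγ : 0 ≤ γ) {H : Set (E → ℝ)} {g : E → ℝ} (hg : g ∈ H)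
    (x : E) (hη0 : 0 ≤ η) (hη1 : η ≤ 1) :
    minInnerRisk (advLoss γ) H x η ≤ innerRisk (advLoss γ) g x η :=
  ciInf_le ⟨0, by rintro r ⟨g', rfl⟩; exact advRisk_nonneg hγ _ x hη0 hη1⟩
    (⟨g, hg⟩ : H)

lemma minMargin_le_risk {ρ η : ℝ} {H : Set (E → ℝ)} {g : E → ℝ} (hg : g ∈ H)
    (x : E) (hη0 : 0 ≤ η) (hη1 : η ≤ 1) :
    minInnerRisk (marginLoss (phiRho ρ)) H x η ≤ innerRisk (marginLoss (phiRho ρ)) g x η :=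
  ciInf_le ⟨0, by rintro r ⟨g', rfl⟩; exact marginRisk_nonneg _ x hη0 hη1⟩
    (⟨g, hg⟩ : H)

lemma minMargin_le {G ρ η : ℝ} (hd : 1 ≤ d) (hρ : 0 < ρ) (hρG : ρ ≤ G)
    (x : E) (hη0 : 0 ≤ η) (hη1 : η ≤ 1) :
    minInnerRisk (marginLoss (phiRho ρ)) (Hrelu d G) x η ≤ min η (1 - η) := by
  obtain ⟨w, hw, hwx⟩ := exists_unit_inner_nonpos hd x
  have hbρ : |ρ| ≤ G := by rw [abs_of_pos hρ]; exact hρG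
  have hbnρ : |(-ρ)| ≤ G := by rw [abs_neg, abs_of_pos hρ]; exact hρG
  have hval : max (inner ℝ w x : ℝ) 0 = 0 := max_eq_right hwx
  apply le_min
  · refine le_trans (minMargin_le_risk (mem_Hrelu w hw (-ρ) hbnρ) x hη0 hη1) ?_
    rw [marginRisk_eq]
    simp only [hval, zero_add]
    rw [phiRho_of_nonpos hρ (by linarith : -ρ ≤ 0), neg_neg, phiRho_of_ge hρ le_rfl]
    nlinarith
  · refine le_trans (minMargin_le_risk (mem_Hrelu w hw ρ hbρ) x hη0 hη1) ?_
    rw [marginRisk_eq]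
    simp only [hval, zero_add]
    rw [phiRho_of_ge hρ le_rfl, phiRho_of_nonpos hρ (by linarith : -ρ ≤ 0)]
    nlinarith

end Aux

set_option maxHeartbeats 2000000 in
theorem stmt14 (d : ℕ) (hd : 2 ≤ d) (γ : ℝ) (hγ0 : 0 < γ) (hγ1 : γ < 1)
    (ρ : ℝ) (hρ : 0 < ρ) (G : ℝ) (hG : 1 + γ < G) :
    Calibrated (Hrelu d G) (marginLoss (phiRho ρ)) (advLoss γ) ↔
      (γ < ρ ∧ ρ ≤ G) := by
  have hd1 : 1 ≤ d := le_trans (by norm_num) hd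
  have hG0 : 0 < G := by linarith
  constructor
  · intro hcal
    constructor
    · -- γ < ρ
      by_contra hcon
      push_neg at hcon
      obtain ⟨w, hw⟩ := exists_unit hd1
      set x : EuclideanSpace ℝ (Fin d) := ρ • w with hxdef
      have hxn : ‖x‖ = ρ := by
        rw [hxdef, norm_smul, hw, Real.norm_eq_abs, abs_of_pos hρ, mul_one]
      have hx1 : ‖x‖ ≤ 1 := by rw [hxn]; linarith
      obtain ⟨δ, hδ0, himp⟩ := hcal (1/4) (by norm_num) (1/2) (by norm_num) x hx1
      have hfmem : (fun z => max (inner ℝ w z : ℝ) 0 + 0) ∈ Hrelu d G :=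
        mem_Hrelu w hw 0 (by rw [abs_zero]; linarith)
      have hwx : (inner ℝ w x : ℝ) = ρ := by
        rw [hxdef, real_inner_smul_right, real_inner_self_eq_norm_sq, hw]; ring
      have hfx : max (inner ℝ w x : ℝ) 0 + 0 = ρ := by
        rw [hwx, max_eq_left hρ.le, add_zero]
      have hrisk : innerRisk (marginLoss (phiRho ρ)) (fun z => max (inner ℝ w z : ℝ) 0 + 0) x (1/2)
          = 1/2 := by
        rw [marginRisk_eq]
        simp only [hfx]
        rw [phiRho_of_ge hρ le_rfl, phiRho_of_nonpos hρ (by linarith : -ρ ≤ 0)]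
        ring
      haveI : Nonempty (Hrelu d G) := ⟨⟨_, hfmem⟩⟩
      have hmin : (1:ℝ)/2 ≤ minInnerRisk (marginLoss (phiRho ρ)) (Hrelu d G) x (1/2) := by
        refine le_ciInf fun g => ?_
        rw [marginRisk_eq]
        have h1 := phiRho_add_ge hρ ((g : EuclideanSpace ℝ (Fin d) → ℝ) x)
        linarith
      have hconc := himp _ hfmem (by rw [hrisk]; linarith)
      have hA : advLoss γ (fun z => max (inner ℝ w z : ℝ) 0 + 0) x 1 = 1 := by
        apply advLoss_eq_one hγ0.le
        refine ⟨x - γ • w, ?_, ?_⟩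
        · rw [Metric.mem_closedBall, dist_eq_norm]
          have he : x - γ • w - x = -(γ • w) := by abel
          rw [he, norm_neg, norm_smul, hw, Real.norm_eq_abs, abs_of_pos hγ0, mul_one]
        · have hi : (inner ℝ w (x - γ • w) : ℝ) = ρ - γ := by
            rw [inner_sub_right, hwx, real_inner_smul_right, real_inner_self_eq_norm_sq, hw]
            ring
          simp only [hi]
          rw [max_eq_right (by linarith : ρ - γ ≤ 0)]
          norm_num
      have hB : advLoss γ (fun z => max (inner ℝ w z : ℝ) 0 + 0) x (-1) = 1 := by
        apply advLoss_eq_one hγ0.le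
        refine ⟨x, Metric.mem_closedBall_self hγ0.le, ?_⟩
        simp only [hfx]
        nlinarith
      have hadvf : innerRisk (advLoss γ) (fun z => max (inner ℝ w z : ℝ) 0 + 0) x (1/2) = 1 := by
        rw [advRisk_eq, hA, hB]; ring
      have hgmem : (fun z => max (inner ℝ w z : ℝ) 0 + G) ∈ Hrelu d G :=
        mem_Hrelu w hw G (by rw [abs_of_pos hG0])
      have hgA : advLoss γ (fun z => max (inner ℝ w z : ℝ) 0 + G) x 1 = 0 := by
        apply advLoss_eq_zero hγ0.le
        intro x' hx' hcontra
        rw [one_mul] at hcontra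
        have h1 : (0:ℝ) ≤ max (inner ℝ w x' : ℝ) 0 := le_max_right _ _
        linarith
      have hminadv : minInnerRisk (advLoss γ) (Hrelu d G) x (1/2) ≤ 1/2 := by
        refine le_trans (minAdv_le hγ0.le hgmem x (by norm_num) (by norm_num)) ?_
        rw [advRisk_eq, hgA]
        have h1 := advLoss_le_one hγ0.le (fun z => max (inner ℝ w z : ℝ) 0 + G) x (-1)
        linarith
      rw [hadvf] at hconc
      linarith
    · -- ρ ≤ G
      by_contra hcon
      push_neg at hcon
      obtain ⟨u, hu⟩ := exists_unit hd1
      obtain ⟨η, hη0, hηhalf, hK1, hK2⟩ :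
          ∃ η : ℝ, 0 < η ∧ η < 1/2 ∧ (1-η)*G ≤ η*ρ ∧ G ≤ η*(2*G+1) := by
        have hGρ : 0 < G + ρ := by linarith
        have h2G1 : (0:ℝ) < 2*G+1 := by linarith
        have ha1 : G/(G+ρ) < 1/2 := by rw [div_lt_iff₀ hGρ]; linarith
        have ha2 : G/(2*G+1) < 1/2 := by rw [div_lt_iff₀ h2G1]; linarith
        have ha : max (G/(G+ρ)) (G/(2*G+1)) < 1/2 := max_lt ha1 ha2
        have ha0 : 0 ≤ max (G/(G+ρ)) (G/(2*G+1)) :=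
          le_trans (div_nonneg hG0.le h2G1.le) (le_max_right _ _)
        refine ⟨max (G/(G+ρ)) (G/(2*G+1))/2 + 1/4, by linarith, by linarith, ?_, ?_⟩
        · have h' : G/(G+ρ) < max (G/(G+ρ)) (G/(2*G+1))/2 + 1/4 :=
            lt_of_le_of_lt (le_max_left _ (G/(2*G+1))) (by linarith)
          rw [div_lt_iff₀ hGρ] at h'
          nlinarith
        · have h' : G/(2*G+1) < max (G/(G+ρ)) (G/(2*G+1))/2 + 1/4 :=
            lt_of_le_of_lt (le_max_right (G/(G+ρ)) _) (by linarith)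
          rw [div_lt_iff₀ h2G1] at h'
          linarith
      set ε := (1 - 2*η)/2 with hεdef
      have hε0 : 0 < ε := by rw [hεdef]; linarith
      obtain ⟨δ, hδ0, himp⟩ := hcal ε hε0 η ⟨by linarith, by linarith⟩ u (le_of_eq hu)
      have hfmem : (fun z => max (inner ℝ u z : ℝ) 0 + G) ∈ Hrelu d G :=
        mem_Hrelu u hu G (by rw [abs_of_pos hG0])
      have huu : (inner ℝ u u : ℝ) = 1 := by
        rw [real_inner_self_eq_norm_sq, hu]; norm_num
      have hfx : max (inner ℝ u u : ℝ) 0 + G = 1 + G := by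
        rw [huu, max_eq_left (by norm_num : (0:ℝ) ≤ 1)]
      have hφG : phiRho ρ G = 1 - G/ρ := by
        have h1 : G/ρ ≤ 1 := le_of_lt ((div_lt_one hρ).mpr hcon)
        have h2 : 0 ≤ G/ρ := div_nonneg hG0.le hρ.le
        unfold phiRho
        rw [max_eq_right (by linarith), min_eq_right (by linarith)]
      have hφ1G : phiRho ρ (1+G) = max 0 (1 - (1+G)/ρ) := by
        have h2 : 0 ≤ (1+G)/ρ := div_nonneg (by linarith) hρ.le
        unfold phiRho
        rw [min_eq_right (max_le zero_le_one (by linarith))]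
      have hriskf : innerRisk (marginLoss (phiRho ρ)) (fun z => max (inner ℝ u z : ℝ) 0 + G) u η
          = η * phiRho ρ (1+G) + (1-η) := by
        rw [marginRisk_eq]
        simp only [hfx]
        rw [phiRho_of_nonpos hρ (by linarith : -(1+G) ≤ 0)]
        ring
      haveI : Nonempty (Hrelu d G) := ⟨⟨_, hfmem⟩⟩
      have hminm : η * phiRho ρ (1+G) + (1-η)
          ≤ minInnerRisk (marginLoss (phiRho ρ)) (Hrelu d G) u η := by
        refine le_ciInf fun gg => ?_
        obtain ⟨w', b', hw', hb', hge⟩ := gg.2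
        rw [marginRisk_eq, hge]
        have hbt : (fun x => max (inner ℝ w' x : ℝ) 0 + b') u = max (inner ℝ w' u : ℝ) 0 + b' := rfl
        rw [hbt]
        set s := max (inner ℝ w' u : ℝ) 0 + b' with hsdef
        have hsub : s ≤ 1 + G := by
          have h1 : max (inner ℝ w' u : ℝ) 0 ≤ 1 := by
            have := relu_le_norm w' u hw'; rw [hu] at this; exact this
          have h2 : b' ≤ G := le_trans (le_abs_self b') hb'
          rw [hsdef]; linarith
        have hslb : -G ≤ s := by
          have h1 : (0:ℝ) ≤ max (inner ℝ w' u : ℝ) 0 := le_max_right _ _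
          have h2 : -G ≤ b' := by have := neg_abs_le b'; linarith
          rw [hsdef]; linarith
        rcases le_total 0 s with hts | hts
        · rw [phiRho_of_nonpos hρ (by linarith : -s ≤ 0)]
          have h3 : phiRho ρ (1+G) ≤ phiRho ρ s := phiRho_anti hρ hsub
          nlinarith
        · rw [phiRho_of_nonpos hρ hts]
          have h2 : 1 - G/ρ ≤ phiRho ρ (-s) := by
            have := phiRho_anti hρ (by linarith : -s ≤ G)
            rw [hφG] at this; exact this
          rw [hφ1G]
          have h5 : (1-η)*(1-G/ρ) ≤ (1-η)*phiRho ρ (-s) :=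
            mul_le_mul_of_nonneg_left h2 (by linarith)
          rcases le_total (1 - (1+G)/ρ) 0 with hcc | hcc
          · rw [max_eq_left hcc]
            have h3 : (1-η)*G/ρ ≤ η := by rw [div_le_iff₀ hρ]; nlinarith
            have h4 : (1-η) * (1 - G/ρ) = (1-η) - (1-η)*G/ρ := by ring
            linarith
          · rw [max_eq_right hcc]
            have h6 : 0 ≤ (η*(2*G+1) - G)/ρ := div_nonneg (by linarith) hρ.le
            have h7 : η*(1-(1+G)/ρ) + (1-η) + (η*(2*G+1) - G)/ρ
                = η + (1-η)*(1-G/ρ) := by field_simp; ring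
            linarith
      have hconc := himp _ hfmem (by rw [hriskf]; linarith)
      have hA : advLoss γ (fun z => max (inner ℝ u z : ℝ) 0 + G) u 1 = 0 := by
        apply advLoss_eq_zero hγ0.le
        intro x' hx' hcontra
        rw [one_mul] at hcontra
        have h1 : (0:ℝ) ≤ max (inner ℝ u x' : ℝ) 0 := le_max_right _ _
        linarith
      have hB : advLoss γ (fun z => max (inner ℝ u z : ℝ) 0 + G) u (-1) = 1 := by
        apply advLoss_eq_one hγ0.le
        refine ⟨u, Metric.mem_closedBall_self hγ0.le, ?_⟩
        simp only [hfx]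
        nlinarith
      have hadvf : innerRisk (advLoss γ) (fun z => max (inner ℝ u z : ℝ) 0 + G) u η = 1 - η := by
        rw [advRisk_eq, hA, hB]; ring
      have hg2mem : (fun z => max (inner ℝ u z : ℝ) 0 + (-G)) ∈ Hrelu d G :=
        mem_Hrelu u hu (-G) (by rw [abs_neg, abs_of_pos hG0])
      have hg2B : advLoss γ (fun z => max (inner ℝ u z : ℝ) 0 + (-G)) u (-1) = 0 := by
        apply advLoss_eq_zero hγ0.le
        intro x' hx' hcontra
        rw [neg_one_mul, neg_nonpos] at hcontra
        have h1 : max (inner ℝ u x' : ℝ) 0 ≤ ‖x'‖ := relu_le_norm u x' hu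
        have h2 : ‖x'‖ ≤ 1 + γ := by
          have h3 := Metric.mem_closedBall.mp hx'
          rw [dist_eq_norm] at h3
          have h4 := norm_sub_norm_le x' u
          rw [hu] at h4
          linarith
        linarith
      have hminadv : minInnerRisk (advLoss γ) (Hrelu d G) u η ≤ η := by
        refine le_trans (minAdv_le hγ0.le hg2mem u (by linarith) (by linarith)) ?_
        rw [advRisk_eq, hg2B]
        have h1 := advLoss_le_one hγ0.le (fun z => max (inner ℝ u z : ℝ) 0 + (-G)) u 1
        nlinarith
      rw [hadvf] at hconc
      linarith
  · rintro ⟨hγρ, hρG⟩ ε hε η hη x hx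
    obtain ⟨hη0, hη1⟩ := hη
    set c := (1 - γ/ρ)/2 with hcdef
    have hsρ : γ / ρ < 1 := (div_lt_one hρ).mpr hγρ
    have hc0 : 0 < c := by rw [hcdef]; linarith
    refine ⟨min c ε, lt_min hc0 hε, ?_⟩
    intro f hf hmargin
    obtain ⟨w, b, hw, hb, hfe⟩ := hf
    subst hfe
    set t := max (inner ℝ w x : ℝ) 0 + b with htdef
    have hminm := minMargin_le hd1 hρ hρG x hη0 hη1
    have hψ : η * phiRho ρ t + (1 - η) * phiRho ρ (-t) < min η (1 - η) + min c ε := by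
      rw [marginRisk_eq] at hmargin
      have h2 := lt_of_lt_of_le hmargin (add_le_add hminm le_rfl)
      exact h2
    have hδc : min c ε ≤ c := min_le_left _ _
    have hδε : min c ε ≤ ε := min_le_right _ _
    have htγ : γ < |t| := by
      by_contra hcon'
      push_neg at hcon'
      have := danger hρ hγ0.le hγρ hη0 hη1 hcon'
      linarith
    have hlip : ∀ x' ∈ Metric.closedBall x γ,
        |(max (inner ℝ w x' : ℝ) 0 + b) - t| ≤ γ := by
      intro x' hx'
      exact le_trans (relu_lip w b hw x x') (Metric.mem_closedBall.mp hx')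
    have hne : (Hrelu d G).Nonempty := ⟨_, mem_Hrelu w hw b hb⟩
    have hminadv := minAdv_ge hγ0.le hne x hη0 hη1
    rcases lt_abs.mp htγ with hpos | hneg
    · -- t > γ : f is positive on the whole ball
      have hA : advLoss γ (fun z => max (inner ℝ w z : ℝ) 0 + b) x 1 = 0 := by
        apply advLoss_eq_zero hγ0.le
        intro x' hx' hcontra
        rw [one_mul] at hcontra
        have h1 := (abs_le.mp (hlip x' hx')).1
        linarith
      have hBle := advLoss_le_one hγ0.le (fun z => max (inner ℝ w z : ℝ) 0 + b) x (-1)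
      have hBge := advLoss_nonneg hγ0.le (fun z => max (inner ℝ w z : ℝ) 0 + b) x (-1)
      have hrb : innerRisk (advLoss γ) (fun z => max (inner ℝ w z : ℝ) 0 + b) x η ≤ 1 - η := by
        rw [advRisk_eq, hA]
        nlinarith
      rcases le_total (1 - η) η with hm | hm
      · have hmeq : min η (1 - η) = 1 - η := min_eq_right hm
        linarith
      · have hmeq : min η (1 - η) = η := min_eq_left hm
        have hεgt : 1 - 2*η < ε := by
          by_contra hce
          push_neg at hce
          have hφ1 : phiRho ρ (-t) = 1 := phiRho_of_nonpos hρ (by linarith)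
          have hφ2 := phiRho_nonneg ρ t
          have hlb : 1 - η ≤ η * phiRho ρ t + (1 - η) * phiRho ρ (-t) := by
            rw [hφ1]; nlinarith
          rw [hmeq] at hψ
          linarith
        linarith
    · -- t < -γ : f is negative on the whole ball
      have hB : advLoss γ (fun z => max (inner ℝ w z : ℝ) 0 + b) x (-1) = 0 := by
        apply advLoss_eq_zero hγ0.le
        intro x' hx' hcontra
        rw [neg_one_mul, neg_nonpos] at hcontra
        have h1 := (abs_le.mp (hlip x' hx')).2
        linarith
      have hAle := advLoss_le_one hγ0.le (fun z => max (inner ℝ w z : ℝ) 0 + b) x 1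
      have hAge := advLoss_nonneg hγ0.le (fun z => max (inner ℝ w z : ℝ) 0 + b) x 1
      have hrb : innerRisk (advLoss γ) (fun z => max (inner ℝ w z : ℝ) 0 + b) x η ≤ η := by
        rw [advRisk_eq, hB]
        nlinarith
      rcases le_total η (1 - η) with hm | hm
      · have hmeq : min η (1 - η) = η := min_eq_left hm
        linarith
      · have hmeq : min η (1 - η) = 1 - η := min_eq_right hm
        have hεgt : 2*η - 1 < ε := by
          by_contra hce
          push_neg at hce
          have hφ1 : phiRho ρ t = 1 := phiRho_of_nonpos hρ (by linarith)
          have hφ2 := phiRho_nonneg ρ (-t)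
          have hlb : η ≤ η * phiRho ρ t + (1 - η) * phiRho ρ (-t) := by
            rw [hφ1]; nlinarith
          rw [hmeq] at hψ
          linarith
        linarith

end
end

section
/- Let g : ℝ → ℝ be non-decreasing and continuous with g(−1−γ) + G > 0 and g(1+γ) − G < 0 for some G ≥ 0, and let ℓ be any loss with values in [0,∞). For w ∈ ℝ^d with ‖w‖ = 1 and |b| ≤ G, write f_{w,b} for the function x ↦ g(w·x) + b in H_g. Then ℓ is H_g-calibrated with respect to the adversarial 0/1 loss ℓ_γ if and only if for every x ∈ X the following three conditions hold (all infima in the extended reals, with inf over the empty set equal to +∞): (i) inf{ C_ℓ(f_{w,b}, x, 1/2) : ‖w‖=1, |b|≤G, g(w·x − γ) + b ≤ 0 ≤ g(w·x + γ) + b } > inf{ C_ℓ(f, x, 1/2) : f ∈ H_g }; (ii) for every η ∈ (1/2, 1], inf{ C_ℓ(f_{w,b}, x, η) : ‖w‖=1, |b|≤G, g(w·x − γ) + b ≤ 0 } > inf{ C_ℓ(f, x, η) : f ∈ H_g }; (iii) for every η ∈ [0, 1/2), inf{ C_ℓ(f_{w,b}, x, η) : ‖w‖=1, |b|≤G, g(w·x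 + γ) + b ≥ 0 } > inf{ C_ℓ(f, x, η) : f ∈ H_g }. -/
open scoped RealInnerProductSpace

noncomputable section

variable {d : ℕ}

/- ### Auxiliary lemmas for `stmt18` -/

lemma iSup_ite_aux {α : Type*} [Nonempty α] (P : α → Prop) [DecidablePred P]
    [Decidable (∃ a, P a)] :
    (⨆ a : α, if P a then (1:ℝ) else 0) = if ∃ a, P a then 1 else 0 := by
  have hbdd : BddAbove (Set.range fun a : α => if P a then (1:ℝ) else 0) := by
    refine ⟨1, ?_⟩
    rintro y ⟨a, rfl⟩
    dsimp only
    split <;> norm_num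
  by_cases h : ∃ a, P a
  · rw [if_pos h]
    obtain ⟨a, ha⟩ := h
    refine le_antisymm (ciSup_le fun b => by by_cases hb : P b <;> simp [hb]) ?_
    have := le_ciSup hbdd a
    simpa [ha] using this
  · rw [if_neg h]
    push_neg at h
    have he : (fun a : α => if P a then (1:ℝ) else 0) = fun _ => 0 :=
      funext fun a => if_neg (h a)
    rw [he, ciSup_const]

lemma inner_ball_bounds {γ : ℝ} {w x x' : EuclideanSpace ℝ (Fin d)} (hw : ‖w‖ = 1)
    (hx' : x' ∈ Metric.closedBall x γ) :
    (inner ℝ w x : ℝ) - γ ≤ (inner ℝ w x' : ℝ) ∧ (inner ℝ w x' : ℝ) ≤ (inner ℝ w x : ℝ) + γ := by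
  have h := abs_real_inner_le_norm w (x - x')
  rw [hw, one_mul, ← dist_eq_norm] at h
  rw [inner_sub_right] at h
  have hd : dist x x' ≤ γ := by
    rw [dist_comm]; exact Metric.mem_closedBall.mp hx'
  have h2 := abs_le.mp (h.trans hd)
  constructor <;> linarith [h2.1, h2.2]

lemma mem_shift {γ : ℝ} (w x : EuclideanSpace ℝ (Fin d)) (hw : ‖w‖ = 1) (s : ℝ)
    (hs : |s| ≤ γ) :
    x + s • w ∈ Metric.closedBall x γ ∧
      (inner ℝ w (x + s • w) : ℝ) = (inner ℝ w x : ℝ) + s := by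
  constructor
  · rw [Metric.mem_closedBall, dist_eq_norm]
    simp [norm_smul, hw, abs_le.mpr, hs]
  · rw [inner_add_right, real_inner_smul_right, real_inner_self_eq_norm_sq, hw]
    ring

lemma advLoss_one {γ : ℝ} (hγ : 0 < γ) {g : ℝ → ℝ} (hg : Monotone g)
    {w : EuclideanSpace ℝ (Fin d)} (hw : ‖w‖ = 1) (b : ℝ) (x : EuclideanSpace ℝ (Fin d)) :
    advLoss γ (fun x' => g (inner ℝ w x' : ℝ) + b) x 1
      = if g ((inner ℝ w x : ℝ) - γ) + b ≤ 0 then 1 else 0 := by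
  classical
  have hne : Nonempty ↥(Metric.closedBall x γ) := ⟨⟨x, Metric.mem_closedBall_self hγ.le⟩⟩
  rw [advLoss]
  simp only [one_mul]
  rw [iSup_ite_aux (fun x' : ↥(Metric.closedBall x γ) =>
    g (inner ℝ w (↑x' : EuclideanSpace ℝ (Fin d)) : ℝ) + b ≤ 0)]
  congr 1
  simp only [eq_iff_iff]
  constructor
  · rintro ⟨⟨x', hx'⟩, h⟩
    have hb := (inner_ball_bounds hw hx').1
    have := hg hb
    have h' : g (inner ℝ w x' : ℝ) + b ≤ 0 := h
    linarith
  · intro h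
    obtain ⟨hmem, hin⟩ := mem_shift w x hw (-γ) (by rw [abs_neg, abs_of_pos hγ])
    refine ⟨⟨x + (-γ) • w, hmem⟩, ?_⟩
    show g (inner ℝ w (x + (-γ) • w) : ℝ) + b ≤ 0
    rw [hin]
    have he : (inner ℝ w x : ℝ) + -γ = (inner ℝ w x : ℝ) - γ := by ring
    rw [he]; exact h

lemma advLoss_neg {γ : ℝ} (hγ : 0 < γ) {g : ℝ → ℝ} (hg : Monotone g)
    {w : EuclideanSpace ℝ (Fin d)} (hw : ‖w‖ = 1) (b : ℝ) (x : EuclideanSpace ℝ (Fin d)) :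
    advLoss γ (fun x' => g (inner ℝ w x' : ℝ) + b) x (-1)
      = if 0 ≤ g ((inner ℝ w x : ℝ) + γ) + b then 1 else 0 := by
  classical
  have hne : Nonempty ↥(Metric.closedBall x γ) := ⟨⟨x, Metric.mem_closedBall_self hγ.le⟩⟩
  rw [advLoss]
  have hrw : ∀ x' : ↥(Metric.closedBall x γ),
      ((-1:ℝ) * ((fun x' => g (inner ℝ w x' : ℝ) + b) ↑x') ≤ 0)
        = (0 ≤ g (inner ℝ w (↑x' : EuclideanSpace ℝ (Fin d)) : ℝ) + b) := by
    intro x'; simp only [eq_iff_iff]; constructor <;> intro h <;> nlinarith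
  simp only [hrw]
  rw [iSup_ite_aux (fun x' : ↥(Metric.closedBall x γ) =>
    0 ≤ g (inner ℝ w (↑x' : EuclideanSpace ℝ (Fin d)) : ℝ) + b)]
  congr 1
  simp only [eq_iff_iff]
  constructor
  · rintro ⟨⟨x', hx'⟩, h⟩
    have hb := (inner_ball_bounds hw hx').2
    have := hg hb
    have h' : 0 ≤ g (inner ℝ w x' : ℝ) + b := h
    linarith
  · intro h
    obtain ⟨hmem, hin⟩ := mem_shift w x hw γ (by rw [abs_of_pos hγ])
    refine ⟨⟨x + γ • w, hmem⟩, ?_⟩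
    show 0 ≤ g (inner ℝ w (x + γ • w) : ℝ) + b
    rw [hin]; exact h

lemma advRisk_eq_s18 {γ : ℝ} (hγ : 0 < γ) {g : ℝ → ℝ} (hg : Monotone g)
    {w : EuclideanSpace ℝ (Fin d)} (hw : ‖w‖ = 1) (b : ℝ) (x : EuclideanSpace ℝ (Fin d))
    (η : ℝ) :
    innerRisk (advLoss γ) (fun x' => g (inner ℝ w x' : ℝ) + b) x η
      = η * (if g ((inner ℝ w x : ℝ) - γ) + b ≤ 0 then 1 else 0)
        + (1 - η) * (if 0 ≤ g ((inner ℝ w x : ℝ) + γ) + b then 1 else 0) := by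
  rw [innerRisk, advLoss_one hγ hg hw, advLoss_neg hγ hg hw]

lemma sInfE_eq (T : Set ℝ) (hne : T.Nonempty) (hbdd : BddBelow T) :
    sInf ((fun r : ℝ => (r : EReal)) '' T) = ((sInf T : ℝ) : EReal) := by
  refine (Monotone.map_csInf_of_continuousAt ?_ ?_ hne hbdd).symm
  · exact (continuous_coe_real_ereal).continuousAt
  · exact fun a b hab => EReal.coe_le_coe_iff.mpr hab

lemma lt_sInfE_iff (M : ℝ) (T : Set ℝ) :
    (M : EReal) < sInf ((fun r : ℝ => (r : EReal)) '' T) ↔ ∃ δ > (0:ℝ), ∀ t ∈ T, M + δ ≤ t := by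
  constructor
  · intro h
    rcases T.eq_empty_or_nonempty with rfl | ⟨t₀, ht₀⟩
    · exact ⟨1, one_pos, fun t ht => ht.elim⟩
    · set I := sInf ((fun r : ℝ => (r : EReal)) '' T) with hI
      have hub : I ≤ (t₀ : EReal) := sInf_le ⟨t₀, ht₀, rfl⟩
      have hIt : I ≠ ⊤ := ne_top_of_le_ne_top (EReal.coe_ne_top t₀) hub
      have hIb : I ≠ ⊥ := by
        intro hb; rw [hb] at h; exact (not_lt_bot h)
      have hcoe : ((I.toReal : ℝ) : EReal) = I := EReal.coe_toReal hIt hIb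
      refine ⟨I.toReal - M, ?_, ?_⟩
      · have h1 : (M : EReal) < (I.toReal : EReal) := by rw [hcoe]; exact h
        have := EReal.coe_lt_coe_iff.mp h1
        linarith
      · intro t ht
        have h1 : I ≤ (t : EReal) := sInf_le ⟨t, ht, rfl⟩
        rw [← hcoe] at h1
        have := EReal.coe_le_coe_iff.mp h1
        linarith
  · rintro ⟨δ, hδ, hall⟩
    have h1 : ((M + δ : ℝ) : EReal) ≤ sInf ((fun r : ℝ => (r : EReal)) '' T) := by
      refine le_sInf ?_
      rintro y ⟨t, ht, rfl⟩
      exact EReal.coe_le_coe_iff.mpr (hall t ht)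
    calc (M : EReal) < ((M + δ : ℝ) : EReal) := EReal.coe_lt_coe_iff.mpr (by linarith)
      _ ≤ _ := h1

lemma sInf_image_eq_minInnerRisk (ℓ : Loss d) (S : Set (EuclideanSpace ℝ (Fin d) → ℝ))
    (x : EuclideanSpace ℝ (Fin d)) (η : ℝ) :
    sInf ((fun f => innerRisk ℓ f x η) '' S) = minInnerRisk ℓ S x η := by
  rw [minInnerRisk, Set.image_eq_range]
  rfl

lemma minAdv_eq (hd : 1 ≤ d) {γ : ℝ} (hγ0 : 0 < γ)
    {g : ℝ → ℝ} (hg : Monotone g) {G : ℝ} (hG : 0 ≤ G)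
    (hg1 : 0 < g (-1 - γ) + G) (hg2 : g (1 + γ) - G < 0)
    {x : EuclideanSpace ℝ (Fin d)} (hx : ‖x‖ ≤ 1) {η : ℝ} (hη0 : 0 ≤ η) (hη1 : η ≤ 1) :
    minInnerRisk (advLoss γ) (Hg d g G) x η = min η (1 - η) := by
  classical
  set w₀ : EuclideanSpace ℝ (Fin d) := EuclideanSpace.single (⟨0, hd⟩ : Fin d) (1:ℝ) with hw₀def
  have hw₀ : ‖w₀‖ = 1 := by rw [hw₀def, EuclideanSpace.norm_single]; norm_num
  have hx0 : |(inner ℝ w₀ x : ℝ)| ≤ 1 := by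
    have h := abs_real_inner_le_norm w₀ x
    rw [hw₀, one_mul] at h
    exact h.trans hx
  have hx0' := abs_le.mp hx0
  have memA : (fun x' => g (inner ℝ w₀ x' : ℝ) + G) ∈ Hg d g G :=
    ⟨w₀, G, hw₀, by rw [abs_of_nonneg hG], rfl⟩
  have memB : (fun x' => g (inner ℝ w₀ x' : ℝ) + (-G)) ∈ Hg d g G :=
    ⟨w₀, -G, hw₀, by rw [abs_neg, abs_of_nonneg hG], rfl⟩
  have hnein : Nonempty ↥(Hg d g G) := ⟨⟨_, memA⟩⟩
  have key : ∀ f ∈ Hg d g G, min η (1 - η) ≤ innerRisk (advLoss γ) f x η := by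
    rintro f ⟨w, b, hw, hb, rfl⟩
    rw [advRisk_eq_s18 hγ0 hg hw]
    have hms : g ((inner ℝ w x : ℝ) - γ) + b ≤ g ((inner ℝ w x : ℝ) + γ) + b := by
      have := hg (show (inner ℝ w x : ℝ) - γ ≤ (inner ℝ w x : ℝ) + γ by linarith)
      linarith
    have hl := min_le_left η (1 - η)
    have hr := min_le_right η (1 - η)
    split_ifs with hA hB hB2
    · nlinarith
    · nlinarith
    · nlinarith
    · have h1 := not_le.mp hA
      have h2 := not_le.mp hB2
      nlinarith
  have hbdd : BddBelow (Set.range fun f : ↥(Hg d g G) => innerRisk (advLoss γ) ↑f x η) := by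
    refine ⟨min η (1 - η), ?_⟩
    rintro r ⟨⟨f, hf⟩, rfl⟩
    exact key f hf
  have hA : innerRisk (advLoss γ) (fun x' => g (inner ℝ w₀ x' : ℝ) + G) x η = 1 - η := by
    rw [advRisk_eq_s18 hγ0 hg hw₀]
    have h1 : 0 < g ((inner ℝ w₀ x : ℝ) - γ) + G := by
      have := hg (show (-1 : ℝ) - γ ≤ (inner ℝ w₀ x : ℝ) - γ by linarith [hx0'.1])
      linarith
    have h2 : (0:ℝ) ≤ g ((inner ℝ w₀ x : ℝ) + γ) + G := by
      have := hg (show (inner ℝ w₀ x : ℝ) - γ ≤ (inner ℝ w₀ x : ℝ) + γ by linarith)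
      linarith
    rw [if_neg (not_le.mpr h1), if_pos h2]
    ring
  have hB : innerRisk (advLoss γ) (fun x' => g (inner ℝ w₀ x' : ℝ) + (-G)) x η = η := by
    rw [advRisk_eq_s18 hγ0 hg hw₀]
    have h2 : g ((inner ℝ w₀ x : ℝ) + γ) + (-G) < 0 := by
      have := hg (show (inner ℝ w₀ x : ℝ) + γ ≤ 1 + γ by linarith [hx0'.2])
      linarith
    have h1 : g ((inner ℝ w₀ x : ℝ) - γ) + (-G) ≤ 0 := by
      have := hg (show (inner ℝ w₀ x : ℝ) - γ ≤ (inner ℝ w₀ x : ℝ) + γ by linarith)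
      linarith
    rw [if_pos h1, if_neg (not_le.mpr h2)]
    ring
  refine le_antisymm ?_ (le_ciInf fun f => key ↑f f.2)
  refine le_min ?_ ?_
  · exact (ciInf_le hbdd (⟨_, memB⟩ : ↥(Hg d g G))).trans_eq hB
  · exact (ciInf_le hbdd (⟨_, memA⟩ : ↥(Hg d g G))).trans_eq hA

/-- Infimum (in the extended reals, inf ∅ = +∞) of the inner ℓ-risk over a set of functions. -/
def infRiskE (ℓ : Loss d) (S : Set (EuclideanSpace ℝ (Fin d) → ℝ))
    (x : EuclideanSpace ℝ (Fin d)) (η : ℝ) : EReal :=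
  sInf ((fun f => ((innerRisk ℓ f x η : ℝ) : EReal)) '' S)

theorem stmt18 (d : ℕ) (hd : 1 ≤ d) (γ : ℝ) (hγ0 : 0 < γ) (hγ1 : γ < 1)
    (g : ℝ → ℝ) (hgmono : Monotone g) (hgcont : Continuous g)
    (G : ℝ) (hG : 0 ≤ G) (hg1 : 0 < g (-1 - γ) + G) (hg2 : g (1 + γ) - G < 0)
    (ℓ : Loss d) (hl : ∀ (f : EuclideanSpace ℝ (Fin d) → ℝ) (x : EuclideanSpace ℝ (Fin d)), ‖x‖ ≤ 1 → ∀ y : ℝ, y = 1 ∨ y = -1 → 0 ≤ ℓ f x y) :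
    Calibrated (Hg d g G) ℓ (advLoss γ) ↔
      ∀ x : EuclideanSpace ℝ (Fin d), ‖x‖ ≤ 1 →
        (infRiskE ℓ (Hg d g G) x (1/2) <
          infRiskE ℓ { f | ∃ (w : EuclideanSpace ℝ (Fin d)) (b : ℝ),
            ‖w‖ = 1 ∧ |b| ≤ G ∧ f = (fun x' => g (inner ℝ w x' : ℝ) + b) ∧
            g ((inner ℝ w x : ℝ) - γ) + b ≤ 0 ∧ 0 ≤ g ((inner ℝ w x : ℝ) + γ) + b } x (1/2)) ∧
        (∀ η : ℝ, 1/2 < η → η ≤ 1 →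
          infRiskE ℓ (Hg d g G) x η <
            infRiskE ℓ { f | ∃ (w : EuclideanSpace ℝ (Fin d)) (b : ℝ),
              ‖w‖ = 1 ∧ |b| ≤ G ∧ f = (fun x' => g (inner ℝ w x' : ℝ) + b) ∧
              g ((inner ℝ w x : ℝ) - γ) + b ≤ 0 } x η) ∧
        (∀ η : ℝ, 0 ≤ η → η < 1/2 →
          infRiskE ℓ (Hg d g G) x η <
            infRiskE ℓ { f | ∃ (w : EuclideanSpace ℝ (Fin d)) (b : ℝ),
              ‖w‖ = 1 ∧ |b| ≤ G ∧ f = (fun x' => g (inner ℝ w x' : ℝ) + b) ∧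
              0 ≤ g ((inner ℝ w x : ℝ) + γ) + b } x η) := by
  classical
  have hrisk0 : ∀ (η : ℝ), 0 ≤ η → η ≤ 1 → ∀ x : EuclideanSpace ℝ (Fin d), ‖x‖ ≤ 1 →
      ∀ f, 0 ≤ innerRisk ℓ f x η := by
    intro η h0 h1 x hx f
    exact add_nonneg (mul_nonneg h0 (hl f x hx 1 (Or.inl rfl)))
      (mul_nonneg (by linarith) (hl f x hx (-1) (Or.inr rfl)))
  obtain ⟨w₀, hw₀⟩ : ∃ w : EuclideanSpace ℝ (Fin d), ‖w‖ = 1 :=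
    ⟨EuclideanSpace.single (⟨0, hd⟩ : Fin d) (1:ℝ), by rw [EuclideanSpace.norm_single]; norm_num⟩
  have memA : (fun x' => g (inner ℝ w₀ x' : ℝ) + G) ∈ Hg d g G :=
    ⟨w₀, G, hw₀, by rw [abs_of_nonneg hG], rfl⟩
  have hne : (Hg d g G).Nonempty := ⟨_, memA⟩
  have hME : ∀ x : EuclideanSpace ℝ (Fin d), ‖x‖ ≤ 1 → ∀ η : ℝ, 0 ≤ η → η ≤ 1 →
      infRiskE ℓ (Hg d g G) x η = ((minInnerRisk ℓ (Hg d g G) x η : ℝ) : EReal) := by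
    intro x hx η h0 h1
    have himg : (fun f => ((innerRisk ℓ f x η : ℝ) : EReal)) '' (Hg d g G)
        = (fun r : ℝ => (r : EReal)) '' ((fun f => innerRisk ℓ f x η) '' (Hg d g G)) :=
      (Set.image_image _ _ _).symm
    rw [infRiskE, himg, sInfE_eq _ (hne.image _)
      ⟨0, by rintro t ⟨f, hf, rfl⟩; exact hrisk0 η h0 h1 x hx f⟩,
      sInf_image_eq_minInnerRisk]
  have hAdv : ∀ x : EuclideanSpace ℝ (Fin d), ‖x‖ ≤ 1 → ∀ η : ℝ, 0 ≤ η → η ≤ 1 →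
      minInnerRisk (advLoss γ) (Hg d g G) x η = min η (1 - η) :=
    fun x hx η h0 h1 => minAdv_eq hd hγ0 hgmono hG hg1 hg2 hx h0 h1
  have hcond : ∀ (Bad : Set (EuclideanSpace ℝ (Fin d) → ℝ)) (x : EuclideanSpace ℝ (Fin d)),
      ‖x‖ ≤ 1 → ∀ η : ℝ, 0 ≤ η → η ≤ 1 →
      ((infRiskE ℓ (Hg d g G) x η < infRiskE ℓ Bad x η) ↔
        ∃ δ > (0:ℝ), ∀ f ∈ Bad, minInnerRisk ℓ (Hg d g G) x η + δ ≤ innerRisk ℓ f x η) := by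
    intro Bad x hx η h0 h1
    have himg : (fun f => ((innerRisk ℓ f x η : ℝ) : EReal)) '' Bad
        = (fun r : ℝ => (r : EReal)) '' ((fun f => innerRisk ℓ f x η) '' Bad) :=
      (Set.image_image _ _ _).symm
    rw [hME x hx η h0 h1]
    conv_lhs => rw [infRiskE, himg]
    rw [lt_sInfE_iff]
    constructor
    · rintro ⟨δ, hδ, h⟩
      exact ⟨δ, hδ, fun f hf => h _ ⟨f, hf, rfl⟩⟩
    · rintro ⟨δ, hδ, h⟩
      exact ⟨δ, hδ, by rintro t ⟨f, hf, rfl⟩; exact h f hf⟩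
  constructor
  · -- Calibrated → conditions
    intro hcal x hx
    refine ⟨?_, ?_, ?_⟩
    · -- (i) η = 1/2
      obtain ⟨δ, hδ, hcal'⟩ := hcal (1/2) (by norm_num) (1/2) ⟨by norm_num, by norm_num⟩ x hx
      refine (hcond _ x hx (1/2) (by norm_num) (by norm_num)).mpr ⟨δ, hδ, ?_⟩
      rintro f ⟨w, b, hw, hb, rfl, hm, hs⟩
      by_contra hlt
      push_neg at hlt
      have hfH : (fun x' => g (inner ℝ w x' : ℝ) + b) ∈ Hg d g G := ⟨w, b, hw, hb, rfl⟩
      have hc := hcal' _ hfH hlt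
      rw [advRisk_eq_s18 hγ0 hgmono hw, hAdv x hx (1/2) (by norm_num) (by norm_num),
        if_pos hm, if_pos hs] at hc
      norm_num at hc
    · -- (ii) η > 1/2
      intro η hη1 hη2
      have h0 : (0:ℝ) ≤ η := by linarith
      obtain ⟨δ, hδ, hcal'⟩ := hcal (2*η - 1) (by linarith) η ⟨h0, hη2⟩ x hx
      refine (hcond _ x hx η h0 hη2).mpr ⟨δ, hδ, ?_⟩
      rintro f ⟨w, b, hw, hb, rfl, hm⟩
      by_contra hlt
      push_neg at hlt
      have hfH : (fun x' => g (inner ℝ w x' : ℝ) + b) ∈ Hg d g G := ⟨w, b, hw, hb, rfl⟩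
      have hc := hcal' _ hfH hlt
      rw [advRisk_eq_s18 hγ0 hgmono hw, hAdv x hx η h0 hη2, if_pos hm,
        min_eq_right (show 1 - η ≤ η by linarith)] at hc
      split_ifs at hc <;> nlinarith
    · -- (iii) η < 1/2
      intro η h0 hη
      have h1 : η ≤ 1 := by linarith
      obtain ⟨δ, hδ, hcal'⟩ := hcal (1 - 2*η) (by linarith) η ⟨h0, h1⟩ x hx
      refine (hcond _ x hx η h0 h1).mpr ⟨δ, hδ, ?_⟩
      rintro f ⟨w, b, hw, hb, rfl, hs⟩
      by_contra hlt
      push_neg at hlt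
      have hfH : (fun x' => g (inner ℝ w x' : ℝ) + b) ∈ Hg d g G := ⟨w, b, hw, hb, rfl⟩
      have hc := hcal' _ hfH hlt
      rw [advRisk_eq_s18 hγ0 hgmono hw, hAdv x hx η h0 h1, if_pos hs,
        min_eq_left (show η ≤ 1 - η by linarith)] at hc
      split_ifs at hc <;> nlinarith
  · -- conditions → Calibrated
    intro hall ε hε η hη x hx
    obtain ⟨h0, h1⟩ := hη
    obtain ⟨c1, c2, c3⟩ := hall x hx
    rcases lt_trichotomy η (1/2) with hlt | heq | hgt
    · -- η < 1/2
      obtain ⟨δ, hδ, hbad⟩ := (hcond _ x hx η h0 h1).mp (c3 η h0 hlt)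
      refine ⟨δ, hδ, ?_⟩
      rintro f ⟨w, b, hw, hb, rfl⟩ hr
      have hs : ¬ (0 ≤ g ((inner ℝ w x : ℝ) + γ) + b) := by
        intro hs
        exact absurd hr (not_lt.mpr (hbad _ ⟨w, b, hw, hb, rfl, hs⟩))
      have hm : g ((inner ℝ w x : ℝ) - γ) + b ≤ 0 := by
        have := hgmono (show (inner ℝ w x : ℝ) - γ ≤ (inner ℝ w x : ℝ) + γ by linarith)
        push_neg at hs
        linarith
      rw [advRisk_eq_s18 hγ0 hgmono hw, hAdv x hx η h0 h1, if_pos hm, if_neg hs,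
        min_eq_left (show η ≤ 1 - η by linarith)]
      linarith
    · -- η = 1/2
      subst heq
      obtain ⟨δ, hδ, hbad⟩ := (hcond _ x hx (1/2) (by norm_num) (by norm_num)).mp c1
      refine ⟨δ, hδ, ?_⟩
      rintro f ⟨w, b, hw, hb, rfl⟩ hr
      have hnb : ¬ (g ((inner ℝ w x : ℝ) - γ) + b ≤ 0 ∧ 0 ≤ g ((inner ℝ w x : ℝ) + γ) + b) := by
        rintro ⟨hm, hs⟩
        exact absurd hr (not_lt.mpr (hbad _ ⟨w, b, hw, hb, rfl, hm, hs⟩))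
      rw [advRisk_eq_s18 hγ0 hgmono hw, hAdv x hx (1/2) (by norm_num) (by norm_num)]
      split_ifs with hA hB
      · exact absurd ⟨hA, hB⟩ hnb
      · norm_num; linarith
      · norm_num; linarith
      · norm_num; linarith
    · -- η > 1/2
      obtain ⟨δ, hδ, hbad⟩ := (hcond _ x hx η h0 h1).mp (c2 η hgt h1)
      refine ⟨δ, hδ, ?_⟩
      rintro f ⟨w, b, hw, hb, rfl⟩ hr
      have hm : ¬ (g ((inner ℝ w x : ℝ) - γ) + b ≤ 0) := by
        intro hm
        exact absurd hr (not_lt.mpr (hbad _ ⟨w, b, hw, hb, rfl, hm⟩))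
      have hs : 0 ≤ g ((inner ℝ w x : ℝ) + γ) + b := by
        have := hgmono (show (inner ℝ w x : ℝ) - γ ≤ (inner ℝ w x : ℝ) + γ by linarith)
        push_neg at hm
        linarith
      rw [advRisk_eq_s18 hγ0 hgmono hw, hAdv x hx η h0 h1, if_neg hm, if_pos hs,
        min_eq_right (show 1 - η ≤ η by linarith)]
      linarith


end
end
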